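/- Every induced-2C2-saturated family F of subsets of [n] contains both the empty set ∅ and the full set [n]. -/
import Mathlib


/-- `F ⊆ 𝒫([n])` contains an induced copy of the poset `2C₂`: four sets
`A ⊊ A'`, `B ⊊ B'`, with each of `A, A'` incomparable to each of `B, B'`. -/
def Contains2C2 {n : ℕ} (F : Finset (Finset (Fin n))) : Prop :=
  ∃ A A' B B' : Finset (Fin n), A ∈ F ∧ A' ∈ F ∧ B ∈ F ∧ B' ∈ F ∧
    A ⊂ A' ∧ B ⊂ B' ∧
    ¬ A ⊆ B ∧ ¬ B ⊆ A ∧ ¬ A ⊆ B' ∧ ¬ B' ⊆ A ∧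
    ¬ A' ⊆ B ∧ ¬ B ⊆ A' ∧ ¬ A' ⊆ B' ∧ ¬ B' ⊆ A'

/-- `F` is induced-`2C₂`-saturated: it is induced-`2C₂`-free, and adding any
missing set creates an induced copy of `2C₂`. -/
def Saturated2C2 {n : ℕ} (F : Finset (Finset (Fin n))) : Prop :=
  ¬ Contains2C2 F ∧ ∀ S : Finset (Fin n), S ∉ F → Contains2C2 (insert S F)

/-- Every induced-`2C₂`-saturated family contains both `∅` and `[n]`. -/
theorem saturated_contains_empty_and_full (n : ℕ)
    (F : Finset (Finset (Fin n))) (hF : Saturated2C2 F) :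
    (∅ : Finset (Fin n)) ∈ F ∧ (Finset.univ : Finset (Fin n)) ∈ F := by
  obtain ⟨hfree, hsat⟩ := hF
  constructor
  · by_contra h
    obtain ⟨A, A', B, B', hA, hA', hB, hB', hAA, hBB, h1, h2, h3, h4, h5, h6, h7, h8⟩ :=
      hsat ∅ h
    apply hfree
    refine ⟨A, A', B, B', ?_, ?_, ?_, ?_, hAA, hBB, h1, h2, h3, h4, h5, h6, h7, h8⟩
    · rcases Finset.mem_insert.1 hA with rfl | hA
      · exact absurd (Finset.empty_subset B) h1
      · exact hA
    · rcases Finset.mem_insert.1 hA' with rfl | hA'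
      · exact absurd (Finset.empty_subset B) h5
      · exact hA'
    · rcases Finset.mem_insert.1 hB with rfl | hB
      · exact absurd (Finset.empty_subset A) h2
      · exact hB
    · rcases Finset.mem_insert.1 hB' with rfl | hB'
      · exact absurd (Finset.empty_subset A) h4
      · exact hB'
  · by_contra h
    obtain ⟨A, A', B, B', hA, hA', hB, hB', hAA, hBB, h1, h2, h3, h4, h5, h6, h7, h8⟩ :=
      hsat Finset.univ h
    apply hfree
    refine ⟨A, A', B, B', ?_, ?_, ?_, ?_, hAA, hBB, h1, h2, h3, h4, h5, h6, h7, h8⟩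
    · rcases Finset.mem_insert.1 hA with rfl | hA
      · exact absurd (Finset.subset_univ B) h2
      · exact hA
    · rcases Finset.mem_insert.1 hA' with rfl | hA'
      · exact absurd (Finset.subset_univ B) h6
      · exact hA'
    · rcases Finset.mem_insert.1 hB with rfl | hB
      · exact absurd (Finset.subset_univ A) h1
      · exact hB
    · rcases Finset.mem_insert.1 hB' with rfl | hB'
      · exact absurd (Finset.subset_univ A) h3
      · exact hB'
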